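/- For the hypersurface {t = t₀} of (ℝ⁴, g̃) with unit normal ξ = e₄ and tangent orthonormal frame {e₁, e₂, e₃}, the second fundamental form h(eᵢ, eⱼ) = g̃(∇̃_{eᵢ} eⱼ, e₄) (i, j ∈ {1,2,3}) has matrix [[0, 1/2, 0], [1/2, 0, 1/2], [0, 1/2, 0]] at every point. In particular h ≠ 0 (the hypersurface is not totally geodesic) and the mean curvature H = (1/3)(h₁₁ + h₂₂ + h₃₃) = 0 (the hypersurface is minimal). -/

import Mathlib

noncomputable section

/-- The left-invariant frame fields e₁,e₂,e₃,e₄ on ℝ⁴ (coordinates x,y,z,t = p 0,...,p 3). -/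
def eVF (i : Fin 4) (p : Fin 4 → ℝ) : Fin 4 → ℝ :=
  ![![1, 0, 0, 0],
    ![p 3, 1, 0, 0],
    ![(p 3) ^ 2 / 2, p 3, 1, 0],
    ![0, 0, 0, 1]] i

/-- The matrix of the metric g̃ at a point with last coordinate t. -/
def gMat (t : ℝ) : Matrix (Fin 4) (Fin 4) ℝ :=
  !![1, -t, t ^ 2 / 2, 0;
     -t, 1 + t ^ 2, -t * (1 + t ^ 2 / 2), 0;
     t ^ 2 / 2, -t * (1 + t ^ 2 / 2), 1 + t ^ 2 + t ^ 4 / 4, 0;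
     0, 0, 0, 1]

/-- The metric g̃ as a bilinear form on each tangent space. -/
def gMet (p X Y : Fin 4 → ℝ) : ℝ :=
  ∑ i, ∑ j, gMat (p 3) i j * X i * Y j

/-- Partial derivative in direction of the i-th coordinate. -/
def pd (i : Fin 4) (f : (Fin 4 → ℝ) → ℝ) (p : Fin 4 → ℝ) : ℝ :=
  deriv (fun s => f (Function.update p i s)) (p i)

/-- The Christoffel symbols Γᵏᵢⱼ of g̃. -/
def Chr (p : Fin 4 → ℝ) (k i j : Fin 4) : ℝ :=
  (1 / 2) * ∑ l, (gMat (p 3))⁻¹ k l *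
    (pd i (fun q => gMat (q 3) j l) p + pd j (fun q => gMat (q 3) i l) p
      - pd l (fun q => gMat (q 3) i j) p)

/-- The Levi-Civita connection of g̃ in coordinates. -/
def nabla (X Y : (Fin 4 → ℝ) → (Fin 4 → ℝ)) (p : Fin 4 → ℝ) : Fin 4 → ℝ :=
  fun k => (∑ i, X p i * pd i (fun q => Y q k) p)
    + ∑ i, ∑ j, Chr p k i j * X p i * Y p j

/-- Lie bracket of vector fields on ℝ⁴. -/
def bracket (X Y : (Fin 4 → ℝ) → (Fin 4 → ℝ)) (p : Fin 4 → ℝ) : Fin 4 → ℝ :=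
  fderiv ℝ Y p (X p) - fderiv ℝ X p (Y p)

/-- The curvature tensor R̃(X,Y)Z = ∇̃_X ∇̃_Y Z − ∇̃_Y ∇̃_X Z − ∇̃_{[X,Y]} Z. -/
def Riem (X Y Z : (Fin 4 → ℝ) → (Fin 4 → ℝ)) (p : Fin 4 → ℝ) : Fin 4 → ℝ :=
  nabla X (nabla Y Z) p - nabla Y (nabla X Z) p - nabla (bracket X Y) Z p

/-- Components of the second fundamental form of the hypersurface {t = t₀}
with unit normal e₄ and tangent frame {e₁,e₂,e₃}. -/
def sff (p : Fin 4 → ℝ) (i j : Fin 3) : ℝ :=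
  gMet p (nabla (eVF i.castSucc) (eVF j.castSucc) p) (eVF 3 p)

def ginv (t : ℝ) : Matrix (Fin 4) (Fin 4) ℝ :=
  !![1 + t ^ 2 + t ^ 4 / 4, t + t ^ 3 / 2, t ^ 2 / 2, 0;
     t + t ^ 3 / 2, 1 + t ^ 2, t, 0;
     t ^ 2 / 2, t, 1, 0;
     0, 0, 0, 1]

lemma gMat_inv (t : ℝ) : (gMat t)⁻¹ = ginv t := by
  apply Matrix.inv_eq_right_inv
  ext i j
  fin_cases i <;> fin_cases j <;>
    simp [gMat, ginv, Matrix.mul_apply, Fin.sum_univ_four] <;> ring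

lemma pd_ne3 {i : Fin 4} (hi : i ≠ 3) (f : ℝ → ℝ) (p : Fin 4 → ℝ) :
    pd i (fun q => f (q 3)) p = 0 := by
  unfold pd
  have h : ∀ s : ℝ, (Function.update p i s) 3 = p 3 := fun s =>
    Function.update_of_ne (Ne.symm hi) _ _
  simp only [h]
  exact deriv_const _ _

lemma pd_at3 (f : ℝ → ℝ) (p : Fin 4 → ℝ) :
    pd 3 (fun q => f (q 3)) p = deriv f (p 3) := by
  unfold pd
  simp only [Function.update_self]

lemma pd_constf (i : Fin 4) (c : ℝ) (p : Fin 4 → ℝ) : pd i (fun _ => c) p = 0 :=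
  deriv_const _ _

lemma d_g01 (x : ℝ) : deriv (fun t : ℝ => -t) x = -1 := by
  simpa using ((hasDerivAt_id x).neg).deriv

lemma d_g02 (x : ℝ) : deriv (fun t : ℝ => t ^ 2 / 2) x = x := by
  have h : HasDerivAt (fun t : ℝ => t ^ 2 / 2) x x := by
    have := (hasDerivAt_pow 2 x).div_const 2
    exact this.congr_deriv (by norm_num)
  exact h.deriv

lemma d_g11 (x : ℝ) : deriv (fun t : ℝ => 1 + t ^ 2) x = 2 * x := by
  have h : HasDerivAt (fun t : ℝ => 1 + t ^ 2) (2 * x) x := by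
    have := (hasDerivAt_pow 2 x).const_add 1
    exact this.congr_deriv (by norm_num)
  exact h.deriv

lemma d_g12 (x : ℝ) : deriv (fun t : ℝ => -t * (1 + t ^ 2 / 2)) x = -(1 + 3 * x ^ 2 / 2) := by
  have h : HasDerivAt (fun t : ℝ => -t * (1 + t ^ 2 / 2)) (-(1 + 3 * x ^ 2 / 2)) x := by
    have h1 : HasDerivAt (fun t : ℝ => -t) (-1) x := (hasDerivAt_id x).neg
    have h2 : HasDerivAt (fun t : ℝ => 1 + t ^ 2 / 2) (2 * x ^ 1 / 2) x :=
      ((hasDerivAt_pow 2 x).div_const 2).const_add 1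
    have := h1.mul h2
    exact this.congr_deriv (by ring)
  exact h.deriv

lemma d_g22 (x : ℝ) :
    deriv (fun t : ℝ => 1 + t ^ 2 + t ^ 4 / 4) x = 2 * x + x ^ 3 := by
  have h : HasDerivAt (fun t : ℝ => 1 + t ^ 2 + t ^ 4 / 4) (2 * x + x ^ 3) x := by
    have h1 : HasDerivAt (fun t : ℝ => 1 + t ^ 2) (2 * x ^ 1) x :=
      (hasDerivAt_pow 2 x).const_add 1
    have h2 : HasDerivAt (fun t : ℝ => t ^ 4 / 4) (4 * x ^ 3 / 4) x :=
      (hasDerivAt_pow 4 x).div_const 4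
    have := h1.add h2
    exact this.congr_deriv (by ring)
  exact h.deriv

lemma pd3_a (p : Fin 4 → ℝ) : pd 3 (fun q => q 3 ^ 2 / 2) p = p 3 :=
  (pd_at3 (fun t => t ^ 2 / 2) p).trans (d_g02 _)

lemma pd3_b (p : Fin 4 → ℝ) : pd 3 (fun q => 1 + q 3 ^ 2) p = 2 * p 3 :=
  (pd_at3 (fun t => 1 + t ^ 2) p).trans (d_g11 _)

lemma pd3_c (p : Fin 4 → ℝ) :
    pd 3 (fun q => -(q 3 * (1 + q 3 ^ 2 / 2))) p = -(1 + 3 * (p 3) ^ 2 / 2) := by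
  have h : (fun q : Fin 4 → ℝ => -(q 3 * (1 + q 3 ^ 2 / 2)))
      = fun q => (fun t : ℝ => -t * (1 + t ^ 2 / 2)) (q 3) := by funext q; ring
  rw [h]
  exact (pd_at3 (fun t : ℝ => -t * (1 + t ^ 2 / 2)) p).trans (d_g12 _)

lemma pd3_d (p : Fin 4 → ℝ) :
    pd 3 (fun q => 1 + q 3 ^ 2 + q 3 ^ 4 / 4) p = 2 * p 3 + (p 3) ^ 3 :=
  (pd_at3 (fun t => 1 + t ^ 2 + t ^ 4 / 4) p).trans (d_g22 _)

lemma chr3 (p : Fin 4 → ℝ) (i j : Fin 4) :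
    Chr p 3 i j =
      !![0, 1/2, -(p 3)/2, 0;
         1/2, -(p 3), 1/2 + 3 * (p 3) ^ 2 / 4, 0;
         -(p 3)/2, 1/2 + 3 * (p 3) ^ 2 / 4, -(p 3) - (p 3) ^ 3 / 2, 0;
         0, 0, 0, 0] i j := by
  unfold Chr
  rw [gMat_inv]
  fin_cases i <;> fin_cases j <;>
    simp [ginv, gMat, Fin.sum_univ_four, pd_at3, pd_constf,
      pd_ne3 (by decide : (0:Fin 4) ≠ 3), pd_ne3 (by decide : (1:Fin 4) ≠ 3),
      pd_ne3 (by decide : (2:Fin 4) ≠ 3),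
      d_g01, d_g02, d_g11, d_g12, d_g22, pd3_a, pd3_b, pd3_c, pd3_d,
      Matrix.vecHead, Matrix.vecTail] <;> ring

lemma pd_q3 {i : Fin 4} (hi : i ≠ 3) (p : Fin 4 → ℝ) : pd i (fun q => q 3) p = 0 :=
  pd_ne3 hi (fun t => t) p

lemma pd_q3sq {i : Fin 4} (hi : i ≠ 3) (p : Fin 4 → ℝ) :
    pd i (fun q => q 3 ^ 2 / 2) p = 0 :=
  pd_ne3 hi (fun t => t ^ 2 / 2) p

lemma cs0 : Fin.castSucc (0 : Fin 3) = (0 : Fin 4) := rfl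
lemma cs1 : Fin.castSucc (1 : Fin 3) = (1 : Fin 4) := rfl
lemma cs2 : Fin.castSucc (2 : Fin 3) = (2 : Fin 4) := rfl

lemma sff_eval (p : Fin 4 → ℝ) (i j : Fin 3) :
    sff p i j = !![(0:ℝ), 1/2, 0; 1/2, 0, 1/2; 0, 1/2, 0] i j := by
  fin_cases i <;> fin_cases j <;>
    simp [sff, gMet, nabla, eVF, gMat, chr3, Fin.sum_univ_four, pd_constf,
      pd_q3 (by decide : (0:Fin 4) ≠ 3), pd_q3 (by decide : (1:Fin 4) ≠ 3),
      pd_q3 (by decide : (2:Fin 4) ≠ 3),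
      pd_q3sq (by decide : (0:Fin 4) ≠ 3), pd_q3sq (by decide : (1:Fin 4) ≠ 3),
      pd_q3sq (by decide : (2:Fin 4) ≠ 3),
      cs0, cs1, cs2, Matrix.vecHead, Matrix.vecTail] <;> ring

/-- The second fundamental form of {t = t₀} has matrix
[[0,1/2,0],[1/2,0,1/2],[0,1/2,0]]; in particular h ≠ 0 (not totally geodesic)
and the mean curvature vanishes (minimal). -/
theorem nil4_second_fundamental_form (t₀ : ℝ) :
    ∀ p : Fin 4 → ℝ, p 3 = t₀ →
      (∀ i j : Fin 3,
        sff p i j = !![(0:ℝ), 1/2, 0; 1/2, 0, 1/2; 0, 1/2, 0] i j) ∧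
      (∃ i j : Fin 3, sff p i j ≠ 0) ∧
      (1 / 3 : ℝ) * (sff p 0 0 + sff p 1 1 + sff p 2 2) = 0 := by
  intro p _
  refine ⟨fun i j => sff_eval p i j, ⟨0, 1, ?_⟩, ?_⟩
  · rw [sff_eval]; norm_num
  · rw [sff_eval, sff_eval, sff_eval]; norm_num; rfl
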